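/- For all integers k, n ≥ 0 and all scalars x, z ∈ 𝕜: P_{k,n}(x, z) = Σ_{a=0}^{n} (−1)^a · Ш_{n−a,a}^{↑k} · β_{k,a} · ω_a · z^a x^{n−a} in 𝕜B_∞ (a braid binomial-type expansion of the braid Pochhammer symbol). -/

import Mathlib

namespace BraidPaper

/-- Relations of the infinite Artin braid group `B_∞`.  The generator with index `n : ℕ`
represents the Artin generator `σ_{n+1}` (so generators are `σ_1, σ_2, …`). -/
def BraidRels : Set (FreeGroup ℕ) :=
  {r | (∃ i : ℕ, r = .of i * .of (i + 1) * .of i * (.of (i + 1) * .of i * .of (i + 1))⁻¹) ∨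
       (∃ i j : ℕ, i + 2 ≤ j ∧ r = .of i * .of j * (.of j * .of i)⁻¹)}

/-- The infinite Artin braid group `B_∞`, presented by generators `σ_1, σ_2, …` and the
braid and far-commutativity relations. -/
abbrev BInf : Type := PresentedGroup BraidRels

/-- The Artin generator `σ i` of `B_∞` (meaningful for `i ≥ 1`). -/
def σ (i : ℕ) : BInf := PresentedGroup.of (i - 1)

lemma rel_eq_one {r : FreeGroup ℕ} (hr : r ∈ BraidRels) : PresentedGroup.mk BraidRels r = 1 := by
  have : r ∈ Subgroup.normalClosure BraidRels := Subgroup.subset_normalClosure hr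
  exact (QuotientGroup.eq_one_iff r).mpr this

lemma gen_braid (i : ℕ) :
    (PresentedGroup.of i : BInf) * .of (i + 1) * .of i = .of (i + 1) * .of i * .of (i + 1) := by
  have h := rel_eq_one (Or.inl ⟨i, rfl⟩)
  rw [map_mul, map_mul, map_mul, map_inv, map_mul, map_mul, mul_inv_eq_one] at h
  exact h

lemma gen_comm {i j : ℕ} (hij : i + 2 ≤ j) :
    (PresentedGroup.of i : BInf) * .of j = .of j * .of i := by
  have h := rel_eq_one (Or.inr ⟨i, j, hij, rfl⟩)
  rw [map_mul, map_mul, map_inv, map_mul, mul_inv_eq_one] at h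
  exact h

/-- The shift endomorphism `↑ℓ : B_∞ → B_∞`, `σ_i ↦ σ_{i+ℓ}`. -/
def shift (l : ℕ) : BInf →* BInf :=
  PresentedGroup.toGroup (f := fun n => (PresentedGroup.of (n + l) : BInf)) (by
    rintro r (⟨i, rfl⟩ | ⟨i, j, hij, rfl⟩) <;>
      simp only [map_mul, map_inv, FreeGroup.lift_apply_of, mul_inv_eq_one]
    · have h1 : i + 1 + l = i + l + 1 := by omega
      rw [h1]; exact gen_braid (i + l)
    · exact gen_comm (by omega : (i + l) + 2 ≤ j + l))

/-- The ascending product `σ_i σ_{i+1} ⋯ σ_{i+l-1}` (of `l` factors). -/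
def asc (i l : ℕ) : BInf := ((List.range l).map fun t => σ (i + t)).prod

/-- The descending product `σ_i σ_{i-1} ⋯ σ_{i-k+1}` (of `k` factors). -/
def desc (i k : ℕ) : BInf := ((List.range k).map fun t => σ (i - t)).prod

/-- The block transposition braid
`β_{k,l} = (σ_k σ_{k+1} ⋯ σ_{k+l-1})(σ_{k-1} σ_k ⋯ σ_{k+l-2}) ⋯ (σ_1 σ_2 ⋯ σ_l)`,
with `β_{k,0} = β_{0,l} = 1`. -/
def β (k l : ℕ) : BInf := ((List.range k).map fun r => asc (k - r) l).prod

/-- The positive (Garside) lift `ω_a = β_{1,1} β_{2,1} ⋯ β_{a-1,1}` of the longest element of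
the symmetric group `S_a`, with `ω_0 = ω_1 = 1`. -/
def ω (a : ℕ) : BInf := ((List.range (a - 1)).map fun t => β (t + 1) 1).prod

/-- The copy of the braid group `B_n` inside `B_∞`: the subgroup generated by
`σ_1, …, σ_{n-1}`. -/
def BSub (n : ℕ) : Subgroup BInf := Subgroup.closure {g | ∃ i, 1 ≤ i ∧ i < n ∧ g = σ i}



/-! ### Auxiliary group-theoretic lemmas -/

/-- Descending word `σ_{m+l} σ_{m-1+l} ⋯ σ_{1+l}` (shifted copy of `β_{m,1}`). -/
def Wd (l m : ℕ) : BInf := ((List.range m).map fun r => σ (m - r + l)).prod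

/-- `G k a = β_{k,1} β_{k+1,1} ⋯ β_{k+a-1,1}`. -/
def G (k a : ℕ) : BInf := ((List.range a).map fun t => β (k + t) 1).prod

lemma map_range_congr {α : Type*} (f g : ℕ → α) (n : ℕ) (h : ∀ t, t < n → f t = g t) :
    (List.range n).map f = (List.range n).map g := by
  apply List.map_congr_left
  intro t ht
  exact h t (List.mem_range.mp ht)

lemma σ_comm {i j : ℕ} (hi : 1 ≤ i) (h : i + 2 ≤ j) : Commute (σ i) (σ j) := by
  have := gen_comm (i := i - 1) (j := j - 1) (by omega)
  unfold σ
  exact this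

lemma asc_zero (i : ℕ) : asc i 0 = 1 := rfl

lemma asc_succ (i l : ℕ) : asc i (l + 1) = σ i * asc (i + 1) l := by
  unfold asc
  rw [List.range_succ_eq_map, List.map_cons, List.prod_cons, List.map_map,
    map_range_congr ((fun t => σ (i + t)) ∘ Nat.succ) (fun t => σ (i + 1 + t)) l
      (fun t _ => by simp only [Function.comp]; rw [show i + Nat.succ t = i + 1 + t by omega])]
  rfl

lemma β_zero (l : ℕ) : β 0 l = 1 := rfl

lemma β_succ (k l : ℕ) : β (k + 1) l = asc (k + 1) l * β k l := by
  unfold β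
  rw [List.range_succ_eq_map, List.map_cons, List.prod_cons, List.map_map,
    map_range_congr ((fun r => asc (k + 1 - r) l) ∘ Nat.succ) (fun r => asc (k - r) l) k
      (fun r _ => by simp only [Function.comp]; rw [show k + 1 - Nat.succ r = k - r by omega])]
  rfl

lemma β_right_zero (k : ℕ) : β k 0 = 1 := by
  unfold β
  apply List.prod_eq_one
  intro x hx
  simp only [List.mem_map] at hx
  obtain ⟨r, _, rfl⟩ := hx
  rfl

lemma Wd_zero (l : ℕ) : Wd l 0 = 1 := rfl

lemma Wd_cons (l m : ℕ) : Wd l (m + 1) = σ (m + 1 + l) * Wd l m := by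
  unfold Wd
  rw [List.range_succ_eq_map, List.map_cons, List.prod_cons, List.map_map,
    map_range_congr ((fun r => σ (m + 1 - r + l)) ∘ Nat.succ) (fun r => σ (m - r + l)) m
      (fun r _ => by simp only [Function.comp]; rw [show m + 1 - Nat.succ r = m - r by omega])]
  rfl

lemma β_one (m : ℕ) : β m 1 = Wd 0 m := by
  unfold β Wd
  rw [map_range_congr (fun r => asc (m - r) 1) (fun r => σ (m - r + 0)) m
    (fun r _ => by rw [asc_succ, asc_zero, mul_one, Nat.add_zero])]

lemma G_zero (k : ℕ) : G k 0 = 1 := rfl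

lemma G_cons (k a : ℕ) : G k (a + 1) = β k 1 * G (k + 1) a := by
  unfold G
  rw [List.range_succ_eq_map, List.map_cons, List.prod_cons, List.map_map,
    map_range_congr ((fun t => β (k + t) 1) ∘ Nat.succ) (fun t => β (k + 1 + t) 1) a
      (fun t _ => by simp only [Function.comp]; rw [show k + Nat.succ t = k + 1 + t by omega])]
  rfl

lemma G_snoc (k a : ℕ) : G k (a + 1) = G k a * β (k + a) 1 := by
  unfold G
  rw [List.range_succ, List.map_append, List.prod_append, List.map_singleton,
    List.prod_singleton]

lemma ω_eq_G (a : ℕ) : ω a = G 0 a := by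
  cases a with
  | zero => rfl
  | succ m =>
    rw [G_cons, β_zero, one_mul]
    unfold ω G
    rw [Nat.succ_sub_one,
      map_range_congr (fun t => β (t + 1) 1) (fun t => β (0 + 1 + t) 1) m
        (fun t _ => by rw [show t + 1 = 0 + 1 + t by omega])]

lemma σ_comm_Wd {l m j : ℕ} (h : m + l + 2 ≤ j) : Commute (Wd l m) (σ j) := by
  apply Commute.list_prod_left
  intro x hx
  simp only [List.mem_map, List.mem_range] at hx
  obtain ⟨r, hr, rfl⟩ := hx
  exact σ_comm (by omega) (by omega)

lemma Wd_comm_asc {l m i a : ℕ} (h : m + l + 2 ≤ i) : Commute (Wd l m) (asc i a) := by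
  apply Commute.list_prod_right
  intro x hx
  simp only [List.mem_map, List.mem_range] at hx
  obtain ⟨t, ht, rfl⟩ := hx
  exact σ_comm_Wd (by omega)

lemma σ_comm_Wd' {j l m : ℕ} (hj : 1 ≤ j) (h : j + 1 ≤ l) : Commute (σ j) (Wd l m) := by
  apply Commute.list_prod_right
  intro x hx
  simp only [List.mem_map, List.mem_range] at hx
  obtain ⟨r, hr, rfl⟩ := hx
  exact σ_comm hj (by omega)

lemma Wd_comm_G {l m k a : ℕ} (h : k + a ≤ l) : Commute (Wd l m) (G k a) := by
  apply Commute.list_prod_right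
  intro x hx
  simp only [List.mem_map, List.mem_range] at hx
  obtain ⟨t, ht, rfl⟩ := hx
  rw [β_one]
  apply Commute.symm
  apply Commute.list_prod_left
  intro y hy
  simp only [List.mem_map, List.mem_range] at hy
  obtain ⟨r, hr, rfl⟩ := hy
  exact σ_comm_Wd' (by omega) (by omega)

lemma Pstep (a : ℕ) : ∀ k, asc (k + 1) a * G k a = G (k + 1) a := by
  induction a with
  | zero => intro k; rfl
  | succ a ih =>
    intro k
    rw [asc_succ, G_cons, G_cons]
    have hc : asc (k + 1 + 1) a * β k 1 = β k 1 * asc (k + 1 + 1) a := by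
      have := (Wd_comm_asc (l := 0) (m := k) (i := k + 1 + 1) (a := a) (by omega)).eq
      rw [← β_one] at this
      exact this.symm
    calc σ (k + 1) * asc (k + 1 + 1) a * (β k 1 * G (k + 1) a)
        = σ (k + 1) * (asc (k + 1 + 1) a * β k 1) * G (k + 1) a := by
          simp only [mul_assoc]
      _ = σ (k + 1) * (β k 1 * asc (k + 1 + 1) a) * G (k + 1) a := by rw [hc]
      _ = (σ (k + 1) * β k 1) * (asc (k + 1 + 1) a * G (k + 1) a) := by
          simp only [mul_assoc]
      _ = (σ (k + 1) * β k 1) * G (k + 1 + 1) a := by rw [ih (k + 1)]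
      _ = β (k + 1) 1 * G (k + 1 + 1) a := by
          rw [β_one (k + 1), Wd_cons]
          rfl

lemma key1 (a : ℕ) : ∀ k, β k a * ω a = G k a := by
  intro k
  induction k with
  | zero => rw [β_zero, one_mul, ω_eq_G]
  | succ k ih => rw [β_succ, mul_assoc, ih, Pstep]

lemma Wd_split (m b : ℕ) : Wd 0 (m + b) = Wd m b * Wd 0 m := by
  unfold Wd
  rw [add_comm m b, List.range_add, List.map_append, List.prod_append, List.map_map,
    map_range_congr (fun r => σ (b + m - r + 0)) (fun r => σ (b - r + m)) b
      (fun r hr => by rw [show b + m - r + 0 = b - r + m by omega]),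
    map_range_congr ((fun r => σ (b + m - r + 0)) ∘ (b + ·)) (fun r => σ (m - r + 0)) m
      (fun s hs => by simp only [Function.comp]; rw [show b + m - (b + s) + 0 = m - s + 0 by omega])]

lemma star (k a b : ℕ) :
    Wd (k + a) b * (β k (a + 1) * ω (a + 1)) = (β k a * ω a) * β (k + a + b) 1 := by
  rw [key1, key1, G_snoc, β_one (k + a + b), Wd_split (k + a) b, ← β_one (k + a),
    ← mul_assoc, ← mul_assoc, (Wd_comm_G (le_refl (k + a))).eq]

lemma key2 (k a : ℕ) : β k (a + 1) * ω (a + 1) = (β k a * ω a) * β (k + a) 1 := by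
  rw [key1, key1, G_snoc]

lemma shift_σ (l : ℕ) {i : ℕ} (hi : 1 ≤ i) : shift l (σ i) = σ (i + l) := by
  unfold shift σ
  rw [PresentedGroup.toGroup.of]
  congr 1
  omega

lemma shift_Wd (l l' m : ℕ) : shift l (Wd l' m) = Wd (l' + l) m := by
  unfold Wd
  rw [map_list_prod, List.map_map,
    map_range_congr ((fun a => (shift l) a) ∘ fun r => σ (m - r + l')) (fun r => σ (m - r + (l' + l))) m
      (fun r hr => by
        simp only [Function.comp]
        rw [shift_σ l (by omega), show m - r + l' + l = m - r + (l' + l) by omega])]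

lemma shift_β_one (l m : ℕ) : shift l (β m 1) = Wd l m := by
  rw [β_one, shift_Wd, Nat.zero_add]



variable (𝕜 : Type) [CommRing 𝕜]

/-- The canonical embedding of `B_∞` into its group algebra `𝕜B_∞`. -/
noncomputable def ι (g : BInf) : MonoidAlgebra 𝕜 BInf := MonoidAlgebra.of 𝕜 BInf g

/-- The shift `↑ℓ` extended (as an algebra homomorphism) to the group algebra `𝕜B_∞`. -/
noncomputable def shiftA (l : ℕ) : MonoidAlgebra 𝕜 BInf →ₐ[𝕜] MonoidAlgebra 𝕜 BInf :=
  MonoidAlgebra.mapDomainAlgHom 𝕜 𝕜 (shift l)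

/-- The braid shuffle elements `Ш_{m,n} ∈ 𝕜B_∞` (for natural `m, n`), determined by
`Ш_{0,n} = Ш_{m,0} = 1` and the Pascal-type recursion
`Ш_{m,n} = Ш_{m-1,n} + Ш_{m,n-1} β_{m,1}^{↑(n-1)}`. -/
noncomputable def Sh : ℕ → ℕ → MonoidAlgebra 𝕜 BInf
  | 0, _ => 1
  | _ + 1, 0 => 1
  | m + 1, n + 1 => Sh m (n + 1) + Sh (m + 1) n * ι 𝕜 (shift n (β (m + 1) 1))
  termination_by m n => (m, n)

/-- The braid shuffle elements `Ш_{m,n} ∈ 𝕜B_∞` for integer indices: `Ш_{m,n} = 0` whenever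
`m < 0` or `n < 0`. -/
noncomputable def ShZ (m n : ℤ) : MonoidAlgebra 𝕜 BInf :=
  if 0 ≤ m ∧ 0 ≤ n then Sh 𝕜 m.toNat n.toNat else 0

/-- The braid Pochhammer symbol
`P_{k,n}(x,y) = (x - β_{k,1} y)(x - β_{k+1,1} y) ⋯ (x - β_{k+n-1,1} y) ∈ 𝕜B_∞`. -/
noncomputable def Poch (k n : ℕ) (x y : 𝕜) : MonoidAlgebra 𝕜 BInf :=
  ((List.range n).map fun t =>
    algebraMap 𝕜 (MonoidAlgebra 𝕜 BInf) x - algebraMap 𝕜 (MonoidAlgebra 𝕜 BInf) y * ι 𝕜 (β (k + t) 1)).prod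


/-! ### Auxiliary algebra lemmas -/

lemma ι_mul (g h : BInf) : ι 𝕜 (g * h) = ι 𝕜 g * ι 𝕜 h :=
  map_mul (MonoidAlgebra.of 𝕜 BInf) g h

lemma ι_one : ι 𝕜 (1 : BInf) = 1 := map_one (MonoidAlgebra.of 𝕜 BInf)

lemma shiftA_ι (l : ℕ) (g : BInf) : shiftA 𝕜 l (ι 𝕜 g) = ι 𝕜 (shift l g) := by
  simp [ι, shiftA, MonoidAlgebra.of_apply, MonoidAlgebra.mapDomainAlgHom_apply,
    Finsupp.mapDomain_single]

lemma Sh_zero_left (n : ℕ) : Sh 𝕜 0 n = 1 := by rw [Sh]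

lemma Sh_zero_right (m : ℕ) : Sh 𝕜 m 0 = 1 := by
  cases m with
  | zero => rw [Sh]
  | succ m => rw [Sh]

lemma Sh_succ (m n : ℕ) :
    Sh 𝕜 (m + 1) (n + 1) = Sh 𝕜 m (n + 1) + Sh 𝕜 (m + 1) n * ι 𝕜 (shift n (β (m + 1) 1)) := by
  rw [Sh]

/-- The summand appearing in the binomial expansion. -/
noncomputable def Sterm (k n a : ℕ) : MonoidAlgebra 𝕜 BInf :=
  shiftA 𝕜 k (Sh 𝕜 (n - a) a) * ι 𝕜 (β k a) * ι 𝕜 (ω a)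

lemma Sterm_zero (k n : ℕ) : Sterm 𝕜 k n 0 = 1 := by
  unfold Sterm
  rw [Sh_zero_right, map_one, β_right_zero, show ω 0 = 1 from rfl, ι_one, mul_one, mul_one]

lemma Sterm_top (k n : ℕ) :
    Sterm 𝕜 k (n + 1) (n + 1) = Sterm 𝕜 k n n * ι 𝕜 (β (k + n) 1) := by
  unfold Sterm
  rw [Nat.sub_self, Nat.sub_self, Sh_zero_left, Sh_zero_left, map_one, one_mul, one_mul,
    ← ι_mul, ← ι_mul, ← ι_mul]
  exact congrArg (ι 𝕜) (key2 k n)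

lemma Sterm_mid (k n a : ℕ) (h : a < n) :
    Sterm 𝕜 k (n + 1) (a + 1) = Sterm 𝕜 k n (a + 1) + Sterm 𝕜 k n a * ι 𝕜 (β (k + n) 1) := by
  obtain ⟨m, hm⟩ : ∃ m, n - (a + 1) = m := ⟨n - (a + 1), rfl⟩
  have h1 : n + 1 - (a + 1) = m + 1 := by omega
  have h2 : n - a = m + 1 := by omega
  unfold Sterm
  rw [h1, h2, hm, Sh_succ, map_add, map_mul, shiftA_ι, add_mul, add_mul]
  congr 1
  rw [shift_β_one, shift_Wd]
  have hstar : Wd (a + k) (m + 1) * (β k (a + 1) * ω (a + 1)) =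
      β k a * ω a * β (k + n) 1 := by
    rw [show a + k = k + a by omega, star k a (m + 1), show k + a + (m + 1) = k + n by omega]
  calc shiftA 𝕜 k (Sh 𝕜 (m + 1) a) * ι 𝕜 (Wd (a + k) (m + 1)) * ι 𝕜 (β k (a + 1)) *
        ι 𝕜 (ω (a + 1))
      = shiftA 𝕜 k (Sh 𝕜 (m + 1) a) *
          ι 𝕜 (Wd (a + k) (m + 1) * (β k (a + 1) * ω (a + 1))) := by
        rw [ι_mul, ι_mul]; simp only [mul_assoc]
    _ = shiftA 𝕜 k (Sh 𝕜 (m + 1) a) * ι 𝕜 (β k a * ω a * β (k + n) 1) := by rw [hstar]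
    _ = shiftA 𝕜 k (Sh 𝕜 (m + 1) a) * ι 𝕜 (β k a) * ι 𝕜 (ω a) * ι 𝕜 (β (k + n) 1) := by
        rw [ι_mul, ι_mul]; simp only [mul_assoc]

lemma main (k n : ℕ) (x z : 𝕜) :
    Poch 𝕜 k n x z =
      ∑ a ∈ Finset.range (n + 1),
        ((-1 : 𝕜) ^ a * z ^ a * x ^ (n - a)) • Sterm 𝕜 k n a := by
  induction n with
  | zero =>
    rw [Finset.sum_range_one, Sterm_zero]
    simp [Poch]
  | succ n ih =>
    have hP : Poch 𝕜 k (n + 1) x z = Poch 𝕜 k n x z *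
        (algebraMap 𝕜 (MonoidAlgebra 𝕜 BInf) x -
          algebraMap 𝕜 (MonoidAlgebra 𝕜 BInf) z * ι 𝕜 (β (k + n) 1)) := by
      unfold Poch
      rw [List.range_succ, List.map_append, List.prod_append, List.map_singleton,
        List.prod_singleton]
    rw [hP, ih, Finset.sum_mul]
    have hterm : ∀ a ∈ Finset.range (n + 1),
        (((-1 : 𝕜) ^ a * z ^ a * x ^ (n - a)) • Sterm 𝕜 k n a) *
          (algebraMap 𝕜 (MonoidAlgebra 𝕜 BInf) x -
            algebraMap 𝕜 (MonoidAlgebra 𝕜 BInf) z * ι 𝕜 (β (k + n) 1))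
        = ((-1 : 𝕜) ^ a * z ^ a * x ^ (n + 1 - a)) • Sterm 𝕜 k n a
          + ((-1 : 𝕜) ^ (a + 1) * z ^ (a + 1) * x ^ (n + 1 - (a + 1))) •
              (Sterm 𝕜 k n a * ι 𝕜 (β (k + n) 1)) := by
      intro a ha
      rw [Finset.mem_range] at ha
      have hx : x ^ (n + 1 - a) = x ^ (n - a) * x := by
        rw [← pow_succ]; congr 1; omega
      have h2 : n + 1 - (a + 1) = n - a := by omega
      have hc : Sterm 𝕜 k n a * (algebraMap 𝕜 (MonoidAlgebra 𝕜 BInf) x -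
            algebraMap 𝕜 (MonoidAlgebra 𝕜 BInf) z * ι 𝕜 (β (k + n) 1)) =
          x • Sterm 𝕜 k n a - z • (Sterm 𝕜 k n a * ι 𝕜 (β (k + n) 1)) := by
        rw [mul_sub, ← Algebra.commutes x, ← Algebra.smul_def, ← mul_assoc,
          ← Algebra.commutes z, mul_assoc, ← Algebra.smul_def]
      rw [smul_mul_assoc, hc, smul_sub, smul_smul, smul_smul, sub_eq_add_neg, ← neg_smul,
        h2, hx]
      congr 1
      · congr 1
        ring
      · congr 1
        ring
    rw [Finset.sum_congr rfl hterm, Finset.sum_add_distrib]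
    rw [Finset.sum_range_succ'
      (fun a => ((-1 : 𝕜) ^ a * z ^ a * x ^ (n + 1 - a)) • Sterm 𝕜 k (n + 1) a) (n + 1)]
    rw [Finset.sum_range_succ
      (fun a => ((-1 : 𝕜) ^ (a + 1) * z ^ (a + 1) * x ^ (n + 1 - (a + 1))) •
        Sterm 𝕜 k (n + 1) (a + 1)) n]
    rw [Finset.sum_congr rfl (fun a (ha : a ∈ Finset.range n) => by
      rw [Sterm_mid 𝕜 k n a (Finset.mem_range.mp ha), smul_add])]
    rw [Finset.sum_add_distrib, Sterm_top]
    rw [Finset.sum_range_succ'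
      (fun a => ((-1 : 𝕜) ^ a * z ^ a * x ^ (n + 1 - a)) • Sterm 𝕜 k n a) n]
    rw [Finset.sum_range_succ
      (fun a => ((-1 : 𝕜) ^ (a + 1) * z ^ (a + 1) * x ^ (n + 1 - (a + 1))) •
        (Sterm 𝕜 k n a * ι 𝕜 (β (k + n) 1))) n]
    simp only [Sterm_zero]
    abel


/-- the braid binomial-type expansion
`P_{k,n}(x,z) = Σ_{a=0}^{n} (-1)^a Ш_{n-a,a}^{↑k} β_{k,a} ω_a z^a x^{n-a}`. -/
theorem pochhammer_binomial_expansion (k n : ℕ) (x z : 𝕜) :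
    Poch 𝕜 k n x z =
      ∑ a ∈ Finset.range (n + 1),
        ((-1 : 𝕜) ^ a * z ^ a * x ^ (n - a)) •
          (shiftA 𝕜 k (Sh 𝕜 (n - a) a) * ι 𝕜 (β k a) * ι 𝕜 (ω a)) := by
  simpa only [Sterm] using main 𝕜 k n x z

end BraidPaper
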